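/- For a 321-avoiding permutation $w$ of $\{1,\dots,n\}$ determined by decreasing sequences $p_1 > \cdots > p_t > 0$ and $q_1 > \cdots > q_t > 0$ with $q_i \geq p_i - 1$ for all $i$, via $w(p_i) = q_i + 1$ (filling in remaining values in increasing order), $w$ is the unique permutation of minimal length such that $\#\{p \leq p_j \mid w(p) > q_i\} \geq 1 + i - j$ for all $1 \leq i, j \leq t$, and the length of $w$ equals $\sum_{i=1}^{t}(q_i - p_i + 1)$. -/

import Mathlib

open Finset

/-- The number of inversions of `w` on `{1, …, n}` (the length of the permutation). -/
def permLength (n : ℕ) (w : ℕ → ℕ) : ℕ :=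
  (((Finset.Icc 1 n) ×ˢ (Finset.Icc 1 n)).filter
    (fun ab => ab.1 < ab.2 ∧ w ab.2 < w ab.1)).card

namespace P321
set_option linter.unusedSectionVars false

variable {n t : ℕ} {p q : Fin t → ℕ} {u : ℕ → ℕ}


/-- rank: number of positions `x ∈ [1,a]` with value `> b`. -/
def rnk (u : ℕ → ℕ) (a b : ℕ) : ℕ := ((Finset.Icc 1 a).filter (fun x => b < u x)).card

/-- inversions with first coordinate `x`. -/
def invAt (n : ℕ) (u : ℕ → ℕ) (x : ℕ) : ℕ :=
  ((Finset.Icc 1 n).filter (fun y => x < y ∧ u y < u x)).card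

variable {n : ℕ} {u : ℕ → ℕ}

lemma mem_icc_set {x : ℕ} (h : x ∈ Finset.Icc 1 n) : x ∈ Set.Icc 1 n := by
  simp only [Finset.mem_Icc] at h; exact ⟨h.1, h.2⟩

lemma rnk_mono (u : ℕ → ℕ) {a a' b b' : ℕ} (ha : a ≤ a') (hb : b' ≤ b) :
    rnk u a b ≤ rnk u a' b' := by
  apply Finset.card_le_card
  intro x hx
  simp only [Finset.mem_filter, Finset.mem_Icc] at hx ⊢
  exact ⟨⟨hx.1.1, hx.1.2.trans ha⟩, lt_of_le_of_lt hb hx.2⟩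

section bij
variable (hu : Set.BijOn u (Set.Icc 1 n) (Set.Icc 1 n))
include hu

lemma umem {x : ℕ} (hx : x ∈ Finset.Icc 1 n) : 1 ≤ u x ∧ u x ≤ n := by
  have := hu.mapsTo (mem_icc_set hx); exact ⟨this.1, this.2⟩

/-- number of positions with value ≤ v is v. -/
lemma card_val_le (v : ℕ) (hv : v ≤ n) :
    ((Finset.Icc 1 n).filter (fun x => u x ≤ v)).card = v := by
  have h : ((Finset.Icc 1 n).filter (fun x => u x ≤ v)).card = (Finset.Icc 1 v).card := by
    apply Finset.card_bij (fun x _ => u x)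
    · intro a ha
      simp only [Finset.mem_filter] at ha
      have := umem hu ha.1
      simp only [Finset.mem_Icc]
      exact ⟨this.1, ha.2⟩
    · intro a ha b hb hab
      simp only [Finset.mem_filter] at ha hb
      exact hu.injOn (mem_icc_set ha.1) (mem_icc_set hb.1) hab
    · intro b hb
      simp only [Finset.mem_Icc] at hb
      obtain ⟨x, hx, hxb⟩ := hu.surjOn (⟨hb.1, hb.2.trans hv⟩ : b ∈ Set.Icc 1 n)
      refine ⟨x, ?_, hxb⟩
      simp only [Finset.mem_filter, Finset.mem_Icc]
      exact ⟨⟨hx.1, hx.2⟩, by rw [hxb]; exact hb.2⟩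
  rw [h, Nat.card_Icc]; omega

/-- number of positions with value > v is n - v. -/
lemma card_val_gt (v : ℕ) (hv : v ≤ n) :
    ((Finset.Icc 1 n).filter (fun x => v < u x)).card = n - v := by
  have h1 := card_val_le hu v hv
  have h2 := Finset.card_filter_add_card_filter_not
    (s := Finset.Icc 1 n) (p := fun x => u x ≤ v)
  have h3 : ((Finset.Icc 1 n).filter (fun x => ¬ u x ≤ v)) =
      ((Finset.Icc 1 n).filter (fun x => v < u x)) := by
    apply Finset.filter_congr; intro x _; simp only [not_le]
  rw [h3] at h2
  have h4 : (Finset.Icc 1 n).card = n := by rw [Nat.card_Icc]; omega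
  omega

end bij




lemma permLength_eq_sum (n : ℕ) (u : ℕ → ℕ) :
    permLength n u = ∑ x ∈ Finset.Icc 1 n, invAt n u x := by
  rw [permLength]
  rw [Finset.card_eq_sum_card_fiberwise (f := Prod.fst) (t := Finset.Icc 1 n)
    (by intro ab hab; simp only [Finset.mem_coe, Finset.mem_filter, Finset.mem_product] at hab; exact hab.1.1)]
  apply Finset.sum_congr rfl
  intro x hx
  rw [invAt]
  apply Finset.card_bij (fun ab _ => ab.2)
  · intro ab hab
    simp only [Finset.mem_filter, Finset.mem_product] at hab
    simp only [Finset.mem_filter]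
    obtain ⟨⟨⟨h1, h2⟩, h3, h4⟩, h5⟩ := hab
    subst h5
    exact ⟨h2, h3, h4⟩
  · intro ab hab cd hcd h
    simp only [Finset.mem_filter] at hab hcd
    have := hab.2; have := hcd.2
    ext
    · rw [hab.2, hcd.2]
    · exact h
  · intro y hy
    simp only [Finset.mem_filter] at hy
    refine ⟨(x, y), ?_, rfl⟩
    simp only [Finset.mem_filter, Finset.mem_product]
    exact ⟨⟨⟨hx, hy.1⟩, hy.2⟩, trivial⟩

/-- `u x - x = #{a ∈ [1,n] : x ≤ a < u x}` when `x,u x ∈ [1,n]`. -/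
lemma sub_eq_card_between {x : ℕ} (hx : x ∈ Finset.Icc 1 n) (hux : u x ≤ n) :
    u x - x = ((Finset.Icc 1 n).filter (fun a => x ≤ a ∧ a < u x)).card := by
  have : ((Finset.Icc 1 n).filter (fun a => x ≤ a ∧ a < u x)) = Finset.Ico x (u x) := by
    ext a
    simp only [Finset.mem_filter, Finset.mem_Icc, Finset.mem_Ico]
    simp only [Finset.mem_Icc] at hx
    omega
  rw [this, Nat.card_Ico]

/-- displacement-sum swap: `∑ (u x - x) = ∑ rnk u a a`. -/
lemma disp_eq_sum_rnk (hun : ∀ x ∈ Finset.Icc 1 n, u x ≤ n) :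
    ∑ x ∈ Finset.Icc 1 n, (u x - x) = ∑ a ∈ Finset.Icc 1 n, rnk u a a := by
  have h1 : ∀ x ∈ Finset.Icc 1 n, (u x - x) =
      ∑ a ∈ Finset.Icc 1 n, (if x ≤ a ∧ a < u x then 1 else 0) := by
    intro x hx
    rw [sub_eq_card_between hx (hun x hx)]
    rw [Finset.card_filter]
  rw [Finset.sum_congr rfl h1, Finset.sum_comm]
  apply Finset.sum_congr rfl
  intro a ha
  rw [rnk, Finset.card_filter]
  simp only [Finset.mem_Icc] at ha
  rw [← Finset.sum_filter, ← Finset.sum_filter]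
  congr 1
  ext x
  simp only [Finset.mem_filter, Finset.mem_Icc]
  omega




section bij
variable (hu : Set.BijOn u (Set.Icc 1 n) (Set.Icc 1 n))
include hu



/-- key split: `(u x - 1) = #{y < x : u y < u x} + invAt x`. -/
lemma invAt_split {x : ℕ} (hx : x ∈ Finset.Icc 1 n) :
    u x - 1 = ((Finset.Icc 1 n).filter (fun y => y < x ∧ u y < u x)).card + invAt n u x := by
  have hux := umem hu hx
  have h1 : ((Finset.Icc 1 n).filter (fun y => u y < u x)).card = u x - 1 := by
    have hc : ((Finset.Icc 1 n).filter (fun y => u y < u x)) =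
        ((Finset.Icc 1 n).filter (fun y => u y ≤ u x - 1)) := by
      apply Finset.filter_congr
      intro y _
      omega
    rw [hc, card_val_le hu (u x - 1) (by omega)]
  have h2 : ((Finset.Icc 1 n).filter (fun y => u y < u x)) =
      ((Finset.Icc 1 n).filter (fun y => y < x ∧ u y < u x)) ∪
      ((Finset.Icc 1 n).filter (fun y => x < y ∧ u y < u x)) := by
    rw [← Finset.filter_or]
    apply Finset.filter_congr
    intro y hy
    constructor
    · intro h
      rcases lt_trichotomy y x with hc | hc | hc
      · exact Or.inl ⟨hc, h⟩
      · subst hc; omega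
      · exact Or.inr ⟨hc, h⟩
    · rintro (⟨_, h⟩ | ⟨_, h⟩) <;> exact h
  have h3 : Disjoint ((Finset.Icc 1 n).filter (fun y => y < x ∧ u y < u x))
      ((Finset.Icc 1 n).filter (fun y => x < y ∧ u y < u x)) := by
    rw [Finset.disjoint_filter]
    intro y _ hy hy2
    omega
  rw [← h1, h2, Finset.card_union_of_disjoint h3, invAt]

omit hu in
lemma card_lt_left_le {x : ℕ} :
    ((Finset.Icc 1 n).filter (fun y => y < x ∧ u y < u x)).card ≤ x - 1 := by
  calc ((Finset.Icc 1 n).filter (fun y => y < x ∧ u y < u x)).card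
      ≤ (Finset.Icc 1 (x-1)).card := by
        apply Finset.card_le_card
        intro y hy
        simp only [Finset.mem_filter, Finset.mem_Icc] at hy ⊢
        omega
    _ = x - 1 := by rw [Nat.card_Icc]; omega

lemma invAt_ge {x : ℕ} (hx : x ∈ Finset.Icc 1 n) : u x - x ≤ invAt n u x := by
  have h1 := invAt_split hu hx
  have h2 := card_lt_left_le (n := n) (u := u) (x := x)
  have := (umem hu hx).1
  simp only [Finset.mem_Icc] at hx
  omega

/-- equality case, excedance: everything before `x` has smaller value. -/
lemma eq_case_exc {x : ℕ} (hx : x ∈ Finset.Icc 1 n) (heq : invAt n u x = u x - x)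
    (hexc : x < u x) : ∀ y, 1 ≤ y → y < x → u y < u x := by
  have h1 := invAt_split hu hx
  have h2 := card_lt_left_le (n := n) (u := u) (x := x)
  simp only [Finset.mem_Icc] at hx
  have hA : ((Finset.Icc 1 n).filter (fun y => y < x ∧ u y < u x)).card = x - 1 := by omega
  have hset : ((Finset.Icc 1 n).filter (fun y => y < x ∧ u y < u x)) = Finset.Icc 1 (x-1) := by
    apply Finset.eq_of_subset_of_card_le
    · intro y hy
      simp only [Finset.mem_filter, Finset.mem_Icc] at hy ⊢
      omega
    · rw [Nat.card_Icc, hA]; omega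
  intro y h1y hyx
  have : y ∈ Finset.Icc 1 (x-1) := by simp only [Finset.mem_Icc]; omega
  rw [← hset] at this
  simp only [Finset.mem_filter] at this
  exact this.2.2

/-- equality case, non-excedance: everything after `x` has bigger value. -/
lemma eq_case_nonexc {x : ℕ} (hx : x ∈ Finset.Icc 1 n) (heq : invAt n u x = u x - x)
    (hnexc : u x ≤ x) : ∀ y, x < y → y ≤ n → u x < u y := by
  have h0 : invAt n u x = 0 := by omega
  rw [invAt, Finset.card_eq_zero] at h0
  intro y hxy hyn
  have hy : y ∈ Finset.Icc 1 n := by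
    simp only [Finset.mem_Icc] at hx ⊢; omega
  have : ¬ (x < y ∧ u y < u x) := by
    intro hc
    have : y ∈ ((Finset.Icc 1 n).filter (fun y => x < y ∧ u y < u x)) := by
      simp only [Finset.mem_filter]; exact ⟨hy, hc⟩
    rw [h0] at this
    exact absurd this (Finset.notMem_empty y)
  have hne : u y ≠ u x := by
    intro hc
    have := hu.injOn (mem_icc_set hy) (mem_icc_set hx) hc
    omega
  omega

end bij


variable {t : ℕ} {p q : Fin t → ℕ}

def boxc (p q : Fin t → ℕ) (a : ℕ) : ℕ :=
  (Finset.univ.filter (fun i : Fin t => p i ≤ a ∧ a ≤ q i)).card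

section anti
variable (hp : StrictAnti p) (hq : StrictAnti q)
include hp hq

omit hq in
lemma ple_iff {a : ℕ}
    (hne : (Finset.univ.filter (fun m : Fin t => p m ≤ a)).Nonempty) :
    ∀ m : Fin t, p m ≤ a ↔ (Finset.univ.filter (fun m : Fin t => p m ≤ a)).min' hne ≤ m := by
  set j0 := (Finset.univ.filter (fun m : Fin t => p m ≤ a)).min' hne with hj0
  have hj0m : p j0 ≤ a := by
    have := Finset.min'_mem (Finset.univ.filter (fun m : Fin t => p m ≤ a)) hne
    simp only [Finset.mem_filter] at this
    exact this.2
  intro m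
  constructor
  · intro h
    apply Finset.min'_le
    simp only [Finset.mem_filter]
    exact ⟨Finset.mem_univ m, h⟩
  · intro h
    exact le_trans (hp.antitone h) hj0m

omit hp in
lemma qge_iff {b : ℕ}
    (hne : (Finset.univ.filter (fun m : Fin t => b ≤ q m)).Nonempty) :
    ∀ m : Fin t, b ≤ q m ↔ m ≤ (Finset.univ.filter (fun m : Fin t => b ≤ q m)).max' hne := by
  set i0 := (Finset.univ.filter (fun m : Fin t => b ≤ q m)).max' hne with hi0
  have hi0m : b ≤ q i0 := by
    have := Finset.max'_mem (Finset.univ.filter (fun m : Fin t => b ≤ q m)) hne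
    simp only [Finset.mem_filter] at this
    exact this.2
  intro m
  constructor
  · intro h
    apply Finset.le_max'
    simp only [Finset.mem_filter]
    exact ⟨Finset.mem_univ m, h⟩
  · intro h
    exact le_trans hi0m (hq.antitone h)

/-- if some box covers `a`, the set of boxes covering `a` is an interval `[j0,i0]`
  and its size is `i0 + 1 - j0`. -/
lemma boxc_struct {a : ℕ}
    (hne : (Finset.univ.filter (fun i : Fin t => p i ≤ a ∧ a ≤ q i)).Nonempty) :
    ∃ j0 i0 : Fin t, j0 ≤ i0 ∧ p j0 ≤ a ∧ a ≤ q i0 ∧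
      (∀ m : Fin t, p m ≤ a ↔ j0 ≤ m) ∧ (∀ m : Fin t, a ≤ q m ↔ m ≤ i0) ∧
      boxc p q a = i0.val + 1 - j0.val := by
  obtain ⟨m0, hm0⟩ := hne
  simp only [Finset.mem_filter] at hm0
  have hne1 : (Finset.univ.filter (fun m : Fin t => p m ≤ a)).Nonempty :=
    ⟨m0, by simp only [Finset.mem_filter]; exact ⟨Finset.mem_univ _, hm0.2.1⟩⟩
  have hne2 : (Finset.univ.filter (fun m : Fin t => a ≤ q m)).Nonempty :=
    ⟨m0, by simp only [Finset.mem_filter]; exact ⟨Finset.mem_univ _, hm0.2.2⟩⟩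
  set j0 := (Finset.univ.filter (fun m : Fin t => p m ≤ a)).min' hne1 with hj0
  set i0 := (Finset.univ.filter (fun m : Fin t => a ≤ q m)).max' hne2 with hi0
  have h1 := ple_iff hp hne1
  have h2 := qge_iff hq hne2
  have hji : j0 ≤ i0 := le_trans ((h1 m0).1 hm0.2.1) ((h2 m0).1 hm0.2.2)
  refine ⟨j0, i0, hji, (h1 j0).2 le_rfl, (h2 i0).2 le_rfl, h1, h2, ?_⟩
  have hset : (Finset.univ.filter (fun i : Fin t => p i ≤ a ∧ a ≤ q i)) = Finset.Icc j0 i0 := by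
    ext m
    simp only [Finset.mem_filter, Finset.mem_Icc, Finset.mem_univ, true_and]
    rw [h1 m, h2 m]
  rw [boxc, hset, Fin.card_Icc]

/-- boxes covering `a` force `rnk u a a ≥ boxc a` for any `u` satisfying the conditions. -/
lemma boxc_le_rnk {u : ℕ → ℕ}
    (hcond : ∀ i j : Fin t, (1 : ℤ) + (i.val : ℤ) - (j.val : ℤ) ≤ (rnk u (p j) (q i) : ℤ))
    (a : ℕ) : (boxc p q a : ℤ) ≤ (rnk u a a : ℤ) := by
  by_cases hne : (Finset.univ.filter (fun i : Fin t => p i ≤ a ∧ a ≤ q i)).Nonempty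
  · obtain ⟨j0, i0, hji, hpa, haq, _, _, hcard⟩ := boxc_struct hp hq hne
    have hc := hcond i0 j0
    have hmono : rnk u (p j0) (q i0) ≤ rnk u a a := rnk_mono u hpa haq
    have : (j0.val : ℤ) ≤ i0.val := by exact_mod_cast hji
    rw [hcard]
    push_cast
    omega
  · rw [Finset.not_nonempty_iff_eq_empty] at hne
    rw [boxc, hne]
    simp

end anti

/-- total: `∑_{a ∈ [1,n]} boxc a = ∑ i, (q i + 1 - p i)`. -/
lemma sum_boxc {n : ℕ} (hppos : ∀ i, 0 < p i) (hqn : ∀ i, q i + 1 ≤ n) :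
    ∑ a ∈ Finset.Icc 1 n, boxc p q a = ∑ i, (q i + 1 - p i) := by
  have h1 : ∀ a ∈ Finset.Icc 1 n, boxc p q a = ∑ i : Fin t,
      (if p i ≤ a ∧ a ≤ q i then 1 else 0) := by
    intro a _
    rw [boxc, Finset.card_filter]
  rw [Finset.sum_congr rfl h1, Finset.sum_comm]
  apply Finset.sum_congr rfl
  intro i _
  rw [← Finset.sum_filter]
  rw [Finset.sum_const, smul_eq_mul, mul_one]
  have : ((Finset.Icc 1 n).filter (fun a => p i ≤ a ∧ a ≤ q i)) = Finset.Icc (p i) (q i) := by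
    ext a
    simp only [Finset.mem_filter, Finset.mem_Icc]
    have := hppos i; have := hqn i
    omega
  rw [this, Nat.card_Icc]



variable {w : ℕ → ℕ}

/-- count of non-`p` positions in `[1,x]`. -/
def cardD (p : Fin t → ℕ) (x : ℕ) : ℕ := ((Finset.Icc 1 x).filter (fun y => ∀ i, p i ≠ y)).card
/-- count of non-`q+1` values in `[1,v]`. -/
def cardC (q : Fin t → ℕ) (v : ℕ) : ℕ := ((Finset.Icc 1 v).filter (fun c => ∀ i, q i + 1 ≠ c)).card
def cardPle (p : Fin t → ℕ) (x : ℕ) : ℕ := (Finset.univ.filter (fun i : Fin t => p i ≤ x)).card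
def cardQle (q : Fin t → ℕ) (v : ℕ) : ℕ := (Finset.univ.filter (fun i : Fin t => q i + 1 ≤ v)).card

lemma cardD_mono (p : Fin t → ℕ) {x x' : ℕ} (h : x ≤ x') : cardD p x ≤ cardD p x' := by
  apply Finset.card_le_card
  intro y hy
  simp only [Finset.mem_filter, Finset.mem_Icc] at hy ⊢
  exact ⟨⟨hy.1.1, hy.1.2.trans h⟩, hy.2⟩

lemma cardC_mono (q : Fin t → ℕ) {v v' : ℕ} (h : v ≤ v') : cardC q v ≤ cardC q v' := by
  apply Finset.card_le_card
  intro y hy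
  simp only [Finset.mem_filter, Finset.mem_Icc] at hy ⊢
  exact ⟨⟨hy.1.1, hy.1.2.trans h⟩, hy.2⟩

/-- generic complement-count: for an injective `f : Fin t → ℕ` with positive values,
`#{y ∈ [1,x] : y ∉ range f} + #{i : f i ≤ x} = x`. -/
lemma compl_add {f : Fin t → ℕ} (hf : Function.Injective f) (hfpos : ∀ i, 0 < f i) (x : ℕ) :
    ((Finset.Icc 1 x).filter (fun y => ∀ i, f i ≠ y)).card
      + (Finset.univ.filter (fun i : Fin t => f i ≤ x)).card = x := by
  have hsplit := Finset.card_filter_add_card_filter_not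
    (s := Finset.Icc 1 x) (p := fun y => ∀ i, f i ≠ y)
  have h2 : (Finset.univ.filter (fun i : Fin t => f i ≤ x)).card
      = ((Finset.Icc 1 x).filter (fun y => ¬ ∀ i, f i ≠ y)).card := by
    apply Finset.card_bij (fun i _ => f i)
    · intro i hi
      simp only [Finset.mem_filter, Finset.mem_univ, true_and] at hi
      simp only [Finset.mem_filter, Finset.mem_Icc]
      refine ⟨⟨hfpos i, hi⟩, by push_neg; exact ⟨i, rfl⟩⟩
    · intro i _ j _ h
      exact hf h
    · intro y hy
      simp only [Finset.mem_filter, Finset.mem_Icc] at hy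
      obtain ⟨⟨h1, h2⟩, h3⟩ := hy
      push_neg at h3
      obtain ⟨i, hi⟩ := h3
      refine ⟨i, ?_, hi⟩
      simp only [Finset.mem_filter, Finset.mem_univ, true_and]
      omega
  rw [← h2] at hsplit
  rw [hsplit, Nat.card_Icc]
  omega

section anti
variable (hp : StrictAnti p) (hq : StrictAnti q)

include hp in
lemma cardPle_pi (i : Fin t) : cardPle p (p i) = t - i.val := by
  rw [cardPle]
  have : (Finset.univ.filter (fun m : Fin t => p m ≤ p i)) = Finset.Ici i := by
    ext m
    simp only [Finset.mem_filter, Finset.mem_univ, true_and, Finset.mem_Ici]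
    constructor
    · intro h
      by_contra hc
      push_neg at hc
      exact absurd h (not_le.mpr (hp hc))
    · intro h
      exact hp.antitone h
  rw [this, Fin.card_Ici]

include hp in
lemma cardPle_lt_pi (i : Fin t) {x : ℕ} (hx : x < p i) (hx2 : p i ≤ x + 1) :
    cardPle p x = t - 1 - i.val := by
  rw [cardPle]
  have : (Finset.univ.filter (fun m : Fin t => p m ≤ x)) = Finset.Ioi i := by
    ext m
    simp only [Finset.mem_filter, Finset.mem_univ, true_and, Finset.mem_Ioi]
    constructor
    · intro h
      by_contra hc
      push_neg at hc
      have := hp.antitone hc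
      omega
    · intro h
      have := hp h
      omega
  rw [this, Fin.card_Ioi]

include hq in
lemma cardQle_qi1 (i : Fin t) : cardQle q (q i + 1) = t - i.val := by
  rw [cardQle]
  have : (Finset.univ.filter (fun m : Fin t => q m + 1 ≤ q i + 1)) = Finset.Ici i := by
    ext m
    simp only [Finset.mem_filter, Finset.mem_univ, true_and, Finset.mem_Ici]
    constructor
    · intro h
      by_contra hc
      push_neg at hc
      have := hq hc
      omega
    · intro h
      have := hq.antitone h
      omega
  rw [this, Fin.card_Ici]

include hq in
lemma cardQle_qi (i : Fin t) : cardQle q (q i) = t - 1 - i.val := by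
  rw [cardQle]
  have : (Finset.univ.filter (fun m : Fin t => q m + 1 ≤ q i)) = Finset.Ioi i := by
    ext m
    simp only [Finset.mem_filter, Finset.mem_univ, true_and, Finset.mem_Ioi]
    constructor
    · intro h
      by_contra hc
      push_neg at hc
      have := hq.antitone hc
      omega
    · intro h
      have := hq h
      omega
  rw [this, Fin.card_Ioi]

end anti

lemma pi_mem (hppos : ∀ i, 0 < p i) (hpn : ∀ i, p i ≤ n) (i : Fin t) :
    p i ∈ Set.Icc 1 n := ⟨hppos i, hpn i⟩

lemma notinP {x : ℕ} (h : ∀ i, p i ≠ x) : x ∉ Set.range p := by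
  rintro ⟨i, rfl⟩
  exact h i rfl

section wstruct
variable (hp : StrictAnti p) (hq : StrictAnti q)
  (hppos : ∀ i, 0 < p i)
  (hskew : ∀ i, p i ≤ q i + 1)
  (hpn : ∀ i, p i ≤ n) (hqn : ∀ i, q i + 1 ≤ n)
  (hwbij : Set.BijOn w (Set.Icc 1 n) (Set.Icc 1 n))
  (hwdef : ∀ i, w (p i) = q i + 1)
  (hwfill : ∀ a ∈ Set.Icc 1 n, ∀ b ∈ Set.Icc 1 n,
      a ∉ Set.range p → b ∉ Set.range p → a < b → w a < w b)
include hp hppos hpn hwbij hwdef hwfill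

/-- the initial-segment identity for the increasing fill. -/
lemma fill_identity {x : ℕ} (hx1 : 1 ≤ x) (hxn : x ≤ n) (hxP : ∀ i, p i ≠ x) :
    cardD p x = cardC q (w x) := by
  have hxS : x ∈ Set.Icc 1 n := ⟨hx1, hxn⟩
  have hwx := hwbij.mapsTo hxS
  apply Finset.card_bij (fun y _ => w y)
  · intro y hy
    simp only [cardD, Finset.mem_filter, Finset.mem_Icc] at hy
    obtain ⟨⟨hy1, hy2⟩, hyP⟩ := hy
    have hyS : y ∈ Set.Icc 1 n := ⟨hy1, hy2.trans hxn⟩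
    have hwy := hwbij.mapsTo hyS
    simp only [Finset.mem_filter, Finset.mem_Icc]
    refine ⟨⟨hwy.1, ?_⟩, ?_⟩
    · rcases eq_or_lt_of_le hy2 with h | h
      · subst h; exact le_rfl
      · exact le_of_lt (hwfill y hyS x hxS (notinP hyP) (notinP hxP) h)
    · intro i hc
      have : w (p i) = w y := by rw [hwdef i, hc]
      have := hwbij.injOn (pi_mem hppos hpn i) hyS this
      exact hyP i this
  · intro y hy z hz h
    simp only [cardD, Finset.mem_filter, Finset.mem_Icc] at hy hz
    exact hwbij.injOn ⟨hy.1.1, hy.1.2.trans hxn⟩ ⟨hz.1.1, hz.1.2.trans hxn⟩ h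
  · intro c hc
    simp only [Finset.mem_filter, Finset.mem_Icc] at hc
    obtain ⟨⟨hc1, hc2⟩, hcQ⟩ := hc
    obtain ⟨y, hyS, hyc⟩ := hwbij.surjOn (⟨hc1, hc2.trans hwx.2⟩ : c ∈ Set.Icc 1 n)
    have hyP : ∀ i, p i ≠ y := by
      intro i hi
      apply hcQ i
      rw [← hyc, ← hi, hwdef i]
    have hyx : y ≤ x := by
      by_contra hcon
      push_neg at hcon
      have := hwfill x hxS y hyS (notinP hxP) (notinP hyP) hcon
      rw [hyc] at this
      omega
    refine ⟨y, ?_, hyc⟩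
    simp only [cardD, Finset.mem_filter, Finset.mem_Icc]
    exact ⟨⟨hyS.1, hyx⟩, hyP⟩

include hq hskew in
/-- off the corners, `w x ≤ q i` whenever `x ≤ p i` (key skew-shape lemma). -/
lemma NP {x : ℕ} (hx1 : 1 ≤ x) (hxn : x ≤ n) (hxP : ∀ i, p i ≠ x)
    {i : Fin t} (hxpi : x ≤ p i) : w x ≤ q i := by
  by_contra hcon
  push_neg at hcon
  have hxS : x ∈ Set.Icc 1 n := ⟨hx1, hxn⟩
  have hwx := hwbij.mapsTo hxS
  have hneAll : ∀ m, w x ≠ q m + 1 := by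
    intro m hc
    have : w x = w (p m) := by rw [hc, hwdef m]
    have := hwbij.injOn hxS (pi_mem hppos hpn m) this
    exact hxP m this.symm
  have hge : q i + 2 ≤ w x := by
    have := hneAll i
    omega
  -- cardC (w x) ≥ cardC (q i + 1) + 1
  have hstep : cardC q (q i + 1) + 1 ≤ cardC q (w x) := by
    have hsub : insert (w x) ((Finset.Icc 1 (q i + 1)).filter (fun c => ∀ m, q m + 1 ≠ c))
        ⊆ ((Finset.Icc 1 (w x)).filter (fun c => ∀ m, q m + 1 ≠ c)) := by
      intro c hc
      rcases Finset.mem_insert.mp hc with h | h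
      · subst h
        simp only [Finset.mem_filter, Finset.mem_Icc]
        exact ⟨⟨hwx.1, le_rfl⟩, fun m => fun hm => (hneAll m) hm.symm⟩
      · simp only [Finset.mem_filter, Finset.mem_Icc] at h ⊢
        exact ⟨⟨h.1.1, h.1.2.trans (by omega)⟩, h.2⟩
    have hcard := Finset.card_le_card hsub
    rw [Finset.card_insert_of_notMem (by
      simp only [Finset.mem_filter, Finset.mem_Icc]
      push_neg
      intro h
      omega)] at hcard
    rw [cardC, cardC]
    exact hcard
  have hid := fill_identity hp hppos hpn hwbij hwdef hwfill hx1 hxn hxP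
  have hm1 : cardD p x ≤ cardD p (p i) := cardD_mono p hxpi
  have ha1 : cardD p (p i) + cardPle p (p i) = p i :=
    compl_add hp.injective hppos (p i)
  have ha2 : cardPle p (p i) = t - i.val := cardPle_pi hp i
  have ha3 : cardC q (q i + 1) + cardQle q (q i + 1) = q i + 1 :=
    compl_add (fun a b hab => hq.injective (by omega : q a = q b)) (fun m => by omega) (q i + 1)
  have ha4 : cardQle q (q i + 1) = t - i.val := cardQle_qi1 hq i
  have hsk := hskew i
  have hit := i.isLt
  omega

include hq hskew in
/-- off the corners, `w x ≤ x`. -/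
lemma W2 {x : ℕ} (hx1 : 1 ≤ x) (hxn : x ≤ n) (hxP : ∀ i, p i ≠ x) : w x ≤ x := by
  have hxS : x ∈ Set.Icc 1 n := ⟨hx1, hxn⟩
  have hwx := hwbij.mapsTo hxS
  have hsub : (Finset.univ.filter (fun m : Fin t => q m + 1 ≤ w x))
      ⊆ (Finset.univ.filter (fun m : Fin t => p m ≤ x)) := by
    intro m hm
    simp only [Finset.mem_filter, Finset.mem_univ, true_and] at hm ⊢
    by_contra hc
    push_neg at hc
    have := NP hp hq hppos hskew hpn hwbij hwdef hwfill hx1 hxn hxP (le_of_lt hc)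
    omega
  have hcard := Finset.card_le_card hsub
  have hid := fill_identity hp hppos hpn hwbij hwdef hwfill hx1 hxn hxP
  have ha1 : cardD p x + cardPle p x = x := compl_add hp.injective hppos x
  have ha2 : cardC q (w x) + cardQle q (w x) = w x :=
    compl_add (fun a b hab => hq.injective (by omega : q a = q b)) (fun m => by omega) (w x)
  rw [cardQle, cardPle] at *
  omega

include hq in
/-- dual lemma at a trivial corner: positions beyond `p i` have values beyond `q i`. -/
lemma W2' {x : ℕ} (hx1 : 1 ≤ x) (hxn : x ≤ n) (hxP : ∀ i, p i ≠ x)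
    {i : Fin t} (htriv : q i + 1 = p i) (hxpi : p i < x) : q i < w x := by
  by_contra hcon
  push_neg at hcon
  have hxS : x ∈ Set.Icc 1 n := ⟨hx1, hxn⟩
  have hwx := hwbij.mapsTo hxS
  have hm1 : cardC q (w x) ≤ cardC q (q i) := cardC_mono q hcon
  have hstep : cardD p (p i) + 1 ≤ cardD p x := by
    have hsub : insert x ((Finset.Icc 1 (p i)).filter (fun y => ∀ m, p m ≠ y))
        ⊆ ((Finset.Icc 1 x).filter (fun y => ∀ m, p m ≠ y)) := by
      intro c hc
      rcases Finset.mem_insert.mp hc with h | h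
      · subst h
        simp only [Finset.mem_filter, Finset.mem_Icc]
        exact ⟨⟨hx1, le_rfl⟩, hxP⟩
      · simp only [Finset.mem_filter, Finset.mem_Icc] at h ⊢
        exact ⟨⟨h.1.1, h.1.2.trans (le_of_lt hxpi)⟩, h.2⟩
    have hcard := Finset.card_le_card hsub
    rw [Finset.card_insert_of_notMem (by
      simp only [Finset.mem_filter, Finset.mem_Icc]
      push_neg
      intro h
      omega)] at hcard
    rw [cardD, cardD]
    exact hcard
  have hid := fill_identity hp hppos hpn hwbij hwdef hwfill hx1 hxn hxP
  have ha1 : cardD p (p i) + cardPle p (p i) = p i := compl_add hp.injective hppos (p i)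
  have ha2 : cardPle p (p i) = t - i.val := cardPle_pi hp i
  have ha3 : cardC q (q i) + cardQle q (q i) = q i :=
    compl_add (fun a b hab => hq.injective (by omega : q a = q b)) (fun m => by omega) (q i)
  have ha4 : cardQle q (q i) = t - 1 - i.val := cardQle_qi hq i
  have hit := i.isLt
  omega

end wstruct

section props
variable (hu : Set.BijOn u (Set.Icc 1 n) (Set.Icc 1 n))
include hu

/-- if `u` is increasing on excedances-prefixes and non-excedance-suffixes,
`invAt` equals the displacement. -/
lemma invAt_eq_of
    (hP1 : ∀ x, 1 ≤ x → x ≤ n → x < u x → ∀ y, 1 ≤ y → y < x → u y < u x)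
    (hP2 : ∀ x, 1 ≤ x → x ≤ n → u x ≤ x → ∀ y, x < y → y ≤ n → u x < u y)
    {x : ℕ} (hx : x ∈ Finset.Icc 1 n) : invAt n u x = u x - x := by
  simp only [Finset.mem_Icc] at hx
  rcases le_or_gt (u x) x with hc | hc
  · have h0 : invAt n u x = 0 := by
      rw [invAt, Finset.card_eq_zero, Finset.filter_eq_empty_iff]
      intro y hy
      simp only [Finset.mem_Icc] at hy
      intro hcon
      have := hP2 x hx.1 hx.2 hc y hcon.1 hy.2
      omega
    omega
  · have hsplit := invAt_split hu (by simp only [Finset.mem_Icc]; exact hx)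
    have hA : ((Finset.Icc 1 n).filter (fun y => y < x ∧ u y < u x)).card = x - 1 := by
      have hle := card_lt_left_le (n := n) (u := u) (x := x)
      have hge : (Finset.Icc 1 (x-1)).card ≤
          ((Finset.Icc 1 n).filter (fun y => y < x ∧ u y < u x)).card := by
        apply Finset.card_le_card
        intro y hy
        simp only [Finset.mem_Icc] at hy
        simp only [Finset.mem_filter, Finset.mem_Icc]
        have := hP1 x hx.1 hx.2 hc y hy.1 (by omega)
        refine ⟨⟨hy.1, by omega⟩, by omega, this⟩
      rw [Nat.card_Icc] at hge
      omega
    omega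

lemma permLength_eq_disp
    (hP1 : ∀ x, 1 ≤ x → x ≤ n → x < u x → ∀ y, 1 ≤ y → y < x → u y < u x)
    (hP2 : ∀ x, 1 ≤ x → x ≤ n → u x ≤ x → ∀ y, x < y → y ≤ n → u x < u y) :
    permLength n u = ∑ x ∈ Finset.Icc 1 n, (u x - x) := by
  rw [permLength_eq_sum]
  apply Finset.sum_congr rfl
  intro x hx
  exact invAt_eq_of hu hP1 hP2 hx

end props

section wprops
variable (hp : StrictAnti p) (hq : StrictAnti q)
  (hppos : ∀ i, 0 < p i)
  (hskew : ∀ i, p i ≤ q i + 1)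
  (hpn : ∀ i, p i ≤ n) (hqn : ∀ i, q i + 1 ≤ n)
  (hwbij : Set.BijOn w (Set.Icc 1 n) (Set.Icc 1 n))
  (hwdef : ∀ i, w (p i) = q i + 1)
  (hwfill : ∀ a ∈ Set.Icc 1 n, ∀ b ∈ Set.Icc 1 n,
      a ∉ Set.range p → b ∉ Set.range p → a < b → w a < w b)
include hp hq hppos hskew hpn hqn hwbij hwdef hwfill

lemma wP1 : ∀ x, 1 ≤ x → x ≤ n → x < w x → ∀ y, 1 ≤ y → y < x → w y < w x := by
  intro x hx1 hxn hexc y hy1 hyx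
  by_cases hxP : ∀ i, p i ≠ x
  · have := W2 hp hq hppos hskew hpn hwbij hwdef hwfill hx1 hxn hxP
    omega
  · push_neg at hxP
    obtain ⟨i, hi⟩ := hxP
    have hwx : w x = q i + 1 := by rw [← hi, hwdef i]
    by_cases hyP : ∀ m, p m ≠ y
    · have := NP hp hq hppos hskew hpn hwbij hwdef hwfill hy1 (by omega) hyP
        (i := i) (by omega)
      omega
    · push_neg at hyP
      obtain ⟨m, hm⟩ := hyP
      have him : i < m := by
        by_contra hc
        push_neg at hc
        have := hp.antitone hc
        omega
      have := hq him
      have hwy : w y = q m + 1 := by rw [← hm, hwdef m]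
      omega

lemma wP2 : ∀ x, 1 ≤ x → x ≤ n → w x ≤ x → ∀ y, x < y → y ≤ n → w x < w y := by
  intro x hx1 hxn hnexc y hxy hyn
  by_cases hyP : ∀ m, p m ≠ y
  · -- y is not a corner
    by_cases hxP : ∀ i, p i ≠ x
    · exact hwfill x ⟨hx1, hxn⟩ y ⟨by omega, hyn⟩ (notinP hxP) (notinP hyP) hxy
    · push_neg at hxP
      obtain ⟨i, hi⟩ := hxP
      have hwx : w x = q i + 1 := by rw [← hi, hwdef i]
      have htriv : q i + 1 = p i := by
        have := hskew i
        omega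
      have hgt := W2' hp hq hppos hpn hwbij hwdef hwfill (x := y) (by omega) hyn hyP htriv
        (by omega)
      have hne : w y ≠ w x := by
        intro hc
        have := hwbij.injOn ⟨(by omega : 1 ≤ y), hyn⟩ ⟨hx1, hxn⟩ hc
        omega
      omega
  · push_neg at hyP
    obtain ⟨m, hm⟩ := hyP
    have hwy : w y = q m + 1 := by rw [← hm, hwdef m]
    have := hskew m
    omega

/-- Part 2 of the theorem: the length of `w` equals `∑ (qᵢ + 1 - pᵢ)`. -/
lemma permLength_w : permLength n w = ∑ i, (q i + 1 - p i) := by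
  rw [permLength_eq_disp hwbij
    (wP1 hp hq hppos hskew hpn hqn hwbij hwdef hwfill)
    (wP2 hp hq hppos hskew hpn hqn hwbij hwdef hwfill)]
  rw [← Finset.sum_filter_add_sum_filter_not (Finset.Icc 1 n) (fun x => ∀ i, p i ≠ x)]
  have h1 : ∑ x ∈ (Finset.Icc 1 n).filter (fun x => ∀ i, p i ≠ x), (w x - x) = 0 := by
    apply Finset.sum_eq_zero
    intro x hx
    simp only [Finset.mem_filter, Finset.mem_Icc] at hx
    have := W2 hp hq hppos hskew hpn hwbij hwdef hwfill hx.1.1 hx.1.2 hx.2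
    omega
  rw [h1, zero_add]
  have h2 : ((Finset.Icc 1 n).filter (fun x => ¬ ∀ i, p i ≠ x)) =
      Finset.image p Finset.univ := by
    ext x
    simp only [Finset.mem_filter, Finset.mem_Icc, Finset.mem_image, Finset.mem_univ, true_and]
    constructor
    · intro ⟨_, h⟩
      push_neg at h
      obtain ⟨i, hi⟩ := h
      exact ⟨i, hi⟩
    · rintro ⟨i, rfl⟩
      have := hppos i; have := hpn i
      refine ⟨⟨by omega, by omega⟩, by push_neg; exact ⟨i, rfl⟩⟩
  rw [h2]
  rw [Finset.sum_image (fun i _ j _ h => hp.injective h)]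
  apply Finset.sum_congr rfl
  intro i _
  rw [hwdef i]

end wprops

section minimal
variable (hp : StrictAnti p) (hq : StrictAnti q)
  (hppos : ∀ i, 0 < p i) (hqn : ∀ i, q i + 1 ≤ n)
  (hu : Set.BijOn u (Set.Icc 1 n) (Set.Icc 1 n))
  (hcond : ∀ i j : Fin t, (1 : ℤ) + (i.val : ℤ) - (j.val : ℤ) ≤ (rnk u (p j) (q i) : ℤ))

include hu in
lemma permLength_ge_disp : ∑ x ∈ Finset.Icc 1 n, (u x - x) ≤ permLength n u := by
  rw [permLength_eq_sum]
  apply Finset.sum_le_sum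
  intro x hx
  exact invAt_ge hu hx

include hp hq hppos hqn hu hcond in
lemma disp_ge_L : ∑ i, (q i + 1 - p i) ≤ ∑ x ∈ Finset.Icc 1 n, (u x - x) := by
  have hun : ∀ x ∈ Finset.Icc 1 n, u x ≤ n := fun x hx => (umem hu hx).2
  rw [disp_eq_sum_rnk hun]
  calc ∑ i, (q i + 1 - p i) = ∑ a ∈ Finset.Icc 1 n, boxc p q a := (sum_boxc hppos hqn).symm
    _ ≤ ∑ a ∈ Finset.Icc 1 n, rnk u a a := by
        apply Finset.sum_le_sum
        intro a _
        exact_mod_cast boxc_le_rnk hp hq hcond a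

include hp hq hppos hqn hu hcond in
lemma permLength_ge_L : ∑ i, (q i + 1 - p i) ≤ permLength n u :=
  le_trans (disp_ge_L hp hq hppos hqn hu hcond) (permLength_ge_disp hu)

include hp hq hppos hqn hu hcond in
/-- equality extraction: pointwise tightness. -/
lemma tight_of_eq (heq : permLength n u = ∑ i, (q i + 1 - p i)) :
    (∀ x, 1 ≤ x → x ≤ n → invAt n u x = u x - x) ∧
    (∀ a, a ≤ n → rnk u a a = boxc p q a) := by
  have hun : ∀ x ∈ Finset.Icc 1 n, u x ≤ n := fun x hx => (umem hu hx).2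
  have h1 := permLength_ge_disp (n := n) (u := u) hu
  have h2 := disp_ge_L hp hq hppos hqn hu hcond
  have hsum1 : permLength n u = ∑ x ∈ Finset.Icc 1 n, (u x - x) := by
    have heq' := heq
    rw [permLength_eq_sum] at h1 heq' ⊢
    omega
  constructor
  · intro x hx1 hxn
    have hpt : ∀ y ∈ Finset.Icc 1 n, (u y - y) ≤ invAt n u y := fun y hy => invAt_ge hu hy
    have := (Finset.sum_eq_sum_iff_of_le hpt).mp ?_ x (by simp only [Finset.mem_Icc]; omega)
    · omega
    · rw [← hsum1, permLength_eq_sum]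
  · have hsum2 : ∑ a ∈ Finset.Icc 1 n, rnk u a a = ∑ a ∈ Finset.Icc 1 n, boxc p q a := by
      rw [← disp_eq_sum_rnk hun, sum_boxc hppos hqn]
      omega
    have hpt : ∀ a ∈ Finset.Icc 1 n, boxc p q a ≤ rnk u a a := by
      intro a _
      exact_mod_cast boxc_le_rnk hp hq hcond a
    have hp2 := (Finset.sum_eq_sum_iff_of_le hpt).mp hsum2.symm
    intro a han
    rcases Nat.eq_zero_or_pos a with h0 | hpos
    · subst h0
      have : rnk u 0 0 = 0 := by
        rw [rnk]
        simp
      rw [this, boxc]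
      symm
      rw [Finset.card_eq_zero, Finset.filter_eq_empty_iff]
      intro i _
      have := hppos i
      omega
    · exact (hp2 a (by simp only [Finset.mem_Icc]; omega)).symm

end minimal

section unique
variable (hp : StrictAnti p) (hq : StrictAnti q)
  (hppos : ∀ i, 0 < p i) (hqpos : ∀ i, 0 < q i)
  (hskew : ∀ i, p i ≤ q i + 1)
  (hpn : ∀ i, p i ≤ n) (hqn : ∀ i, q i + 1 ≤ n)
  (hu : Set.BijOn u (Set.Icc 1 n) (Set.Icc 1 n))
  (hcond : ∀ i j : Fin t, (1 : ℤ) + (i.val : ℤ) - (j.val : ℤ) ≤ (rnk u (p j) (q i) : ℤ))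
  (htight : ∀ a, a ≤ n → rnk u a a = boxc p q a)
  (hP1 : ∀ x, 1 ≤ x → x ≤ n → x < u x → ∀ y, 1 ≤ y → y < x → u y < u x)
  (hP2 : ∀ x, 1 ≤ x → x ≤ n → u x ≤ x → ∀ y, x < y → y ≤ n → u x < u y)

include hp hq hcond htight in
/-- every (strict) excedance of a tight `u` sits at a nontrivial corner. -/
lemma exc_corner {a : ℕ} (ha1 : 1 ≤ a) (han : a ≤ n) (hexc : a < u a) :
    ∃ j : Fin t, p j = a ∧ p j ≤ q j := by
  have hmem : a ∈ (Finset.Icc 1 a).filter (fun x => a < u x) := by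
    simp only [Finset.mem_filter, Finset.mem_Icc]
    exact ⟨⟨ha1, le_rfl⟩, hexc⟩
  have hpos : 0 < rnk u a a := Finset.card_pos.mpr ⟨a, hmem⟩
  have hbox : 0 < boxc p q a := by
    rw [← htight a han]
    exact hpos
  have hne : (Finset.univ.filter (fun i : Fin t => p i ≤ a ∧ a ≤ q i)).Nonempty :=
    Finset.card_pos.mp hbox
  obtain ⟨j0, i0, hji, hpa, haq, hpiff, hqiff, hcard⟩ := boxc_struct hp hq hne
  by_cases hpj : p j0 = a
  · exact ⟨j0, hpj, by rw [hpj]; exact le_trans haq (hq.antitone hji)⟩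
  · exfalso
    have hplt : p j0 < a := lt_of_le_of_ne hpa hpj
    have hsub : insert a ((Finset.Icc 1 (p j0)).filter (fun x => q i0 < u x)) ⊆
        (Finset.Icc 1 a).filter (fun x => a < u x) := by
      intro x hx
      rcases Finset.mem_insert.mp hx with h | h
      · subst h
        exact hmem
      · simp only [Finset.mem_filter, Finset.mem_Icc] at h ⊢
        exact ⟨⟨h.1.1, le_trans h.1.2 (le_of_lt hplt)⟩, lt_of_le_of_lt haq h.2⟩
    have hnotm : a ∉ ((Finset.Icc 1 (p j0)).filter (fun x => q i0 < u x)) := by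
      simp only [Finset.mem_filter, Finset.mem_Icc]
      push_neg
      intro h
      omega
    have hcards := Finset.card_le_card hsub
    rw [Finset.card_insert_of_notMem hnotm] at hcards
    have h2 := hcond i0 j0
    have h3 : rnk u a a = i0.val + 1 - j0.val := by rw [htight a han, hcard]
    have hji' : (j0.val : ℤ) ≤ (i0.val : ℤ) := by exact_mod_cast hji
    have h3' : (rnk u a a : ℤ) = (i0.val : ℤ) + 1 - (j0.val : ℤ) := by
      rw [h3]
      push_cast [Nat.cast_sub (by omega : j0.val ≤ i0.val + 1)]
      ring
    have hcards' : (rnk u (p j0) (q i0) : ℤ) + 1 ≤ (rnk u a a : ℤ) := by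
      have : rnk u (p j0) (q i0) + 1 ≤ rnk u a a := hcards
      exact_mod_cast this
    omega

include hu hp hq hcond htight hP2 in
/-- a fixed point of a tight `u` is covered by no box. -/
lemma fix_c0 {a : ℕ} (ha1 : 1 ≤ a) (han : a ≤ n) (hfix : u a = a) : boxc p q a = 0 := by
  by_contra hbox
  have hpos : 0 < rnk u a a := by
    rw [htight a han]
    omega
  have hS1 : ((Finset.Icc 1 n).filter (fun y => u y ≤ a)).card = a := card_val_le hu a han
  have hsplit := Finset.card_filter_add_card_filter_not
    (s := Finset.Icc 1 a) (p := fun y => u y ≤ a)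
  have hneg : ((Finset.Icc 1 a).filter (fun y => ¬ u y ≤ a)) =
      ((Finset.Icc 1 a).filter (fun y => a < u y)) := by
    apply Finset.filter_congr
    intro y _
    omega
  rw [hneg] at hsplit
  have hIa : (Finset.Icc 1 a).card = a := by rw [Nat.card_Icc]; omega
  -- so the small-value positions cannot all fit in [1,a]
  have hnsub : ¬ ((Finset.Icc 1 n).filter (fun y => u y ≤ a) ⊆
      (Finset.Icc 1 a).filter (fun y => u y ≤ a)) := by
    intro hsub
    have := Finset.card_le_card hsub
    rw [rnk] at hpos
    omega
  obtain ⟨y, hy1, hy2⟩ := Finset.not_subset.mp hnsub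
  simp only [Finset.mem_filter, Finset.mem_Icc] at hy1 hy2
  push_neg at hy2
  have hya : a < y := by
    by_contra hc
    push_neg at hc
    have := hy2 ⟨hy1.1.1, hc⟩
    omega
  have hne : u y ≠ u a := fun hc => by
    have := hu.injOn ⟨hy1.1.1, hy1.1.2⟩ ⟨ha1, han⟩ hc
    omega
  have := hP2 a ha1 han (le_of_eq hfix) y hya hy1.1.2
  omega

include hp hq hppos hskew hpn hcond htight in
/-- tight `u` does not undershoot corners. -/
lemma corner_pos_le (i : Fin t) : p i ≤ u (p i) := by
  by_contra hcon
  push_neg at hcon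
  have hT : (Finset.univ.filter (fun m : Fin t => p i - 1 ≤ q m)).Nonempty := by
    refine ⟨i, ?_⟩
    simp only [Finset.mem_filter, Finset.mem_univ, true_and]
    have := hskew i
    omega
  set i1 := (Finset.univ.filter (fun m : Fin t => p i - 1 ≤ q m)).max' hT with hi1
  have hqiff := qge_iff hq hT
  have hii1 : i ≤ i1 := (hqiff i).1 (by have := hskew i; omega)
  have hset : (Finset.univ.filter (fun m : Fin t => p m ≤ p i - 1 ∧ p i - 1 ≤ q m)) =
      Finset.Ioc i i1 := by
    ext m
    simp only [Finset.mem_filter, Finset.mem_univ, true_and, Finset.mem_Ioc]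
    constructor
    · rintro ⟨h1, h2⟩
      have hplt : p m < p i := by
        have := hppos m
        omega
      exact ⟨hp.lt_iff_gt.mp hplt, (hqiff m).1 h2⟩
    · rintro ⟨h1, h2⟩
      have : p m < p i := hp h1
      exact ⟨by omega, (hqiff m).2 h2⟩
  have hbox : boxc p q (p i - 1) = i1.val - i.val := by
    rw [boxc, hset, Fin.card_Ioc]
  have hrnk : rnk u (p i - 1) (p i - 1) = i1.val - i.val := by
    rw [htight (p i - 1) (by have := hpn i; omega), hbox]
  have hq1 : p i - 1 ≤ q i1 := (hqiff i1).2 le_rfl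
  have hsub : ((Finset.Icc 1 (p i)).filter (fun x => q i1 < u x)) ⊆
      ((Finset.Icc 1 (p i - 1)).filter (fun x => p i - 1 < u x)) := by
    intro x hx
    simp only [Finset.mem_filter, Finset.mem_Icc] at hx ⊢
    have hxne : x ≠ p i := by
      intro hc
      subst hc
      omega
    refine ⟨⟨hx.1.1, by omega⟩, by omega⟩
  have hcards := Finset.card_le_card hsub
  have hc := hcond i1 i
  have hii1' : (i.val : ℤ) ≤ (i1.val : ℤ) := by exact_mod_cast hii1
  have hr' : (rnk u (p i - 1) (p i - 1) : ℤ) = (i1.val : ℤ) - (i.val : ℤ) := by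
    rw [hrnk]
    push_cast [Nat.cast_sub (by exact_mod_cast hii1 : i.val ≤ i1.val)]
    ring
  have hcards' : (rnk u (p i) (q i1) : ℤ) ≤ (rnk u (p i - 1) (p i - 1) : ℤ) := by
    exact_mod_cast hcards
  omega

include hu hp hq hppos hqpos hskew hpn hqn hcond htight hP1 hP2 in
/-- the main pinning lemma: tight `u` takes the corner values. -/
lemma corner_val : ∀ i : Fin t, u (p i) = q i + 1 := by
  suffices KEY : ∀ d : ℕ, ∀ i : Fin t, t ≤ i.val + d → u (p i) = q i + 1 by
    intro i
    exact KEY t i (by omega)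
  intro d
  induction d with
  | zero =>
    intro i hi
    exact absurd hi (by have := i.isLt; omega)
  | succ d IH =>
    intro i hd
    have IH' : ∀ m : Fin t, i < m → u (p m) = q m + 1 := by
      intro m hm
      have hmv : i.val < m.val := hm
      exact IH m (by omega)
    have hAE := corner_pos_le hp hq hppos hskew hpn hcond htight i
    by_cases htriv : q i + 1 = p i
    · -- trivial corner
      rcases eq_or_lt_of_le hAE with h | h
      · omega
      · obtain ⟨j, hj1, hj2⟩ := exc_corner hp hq hcond htight
          (hppos i) (hpn i) h
        have : j = i := hp.injective hj1
        subst this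
        omega
    · have hpiqi : p i ≤ q i := by
        have := hskew i
        omega
      -- Step 1 : q i < u (p i)
      have hT1 : (Finset.univ.filter (fun m : Fin t => p m ≤ q i)).Nonempty := by
        refine ⟨i, ?_⟩
        simp only [Finset.mem_filter, Finset.mem_univ, true_and]
        exact hpiqi
      set ν := (Finset.univ.filter (fun m : Fin t => p m ≤ q i)).min' hT1 with hν
      have hνiff := ple_iff hp hT1
      have hνi : ν ≤ i := (hνiff i).1 hpiqi
      have hset1 : (Finset.univ.filter (fun m : Fin t => p m ≤ q i ∧ q i ≤ q m)) =
          Finset.Icc ν i := by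
        ext m
        simp only [Finset.mem_filter, Finset.mem_univ, true_and, Finset.mem_Icc]
        constructor
        · rintro ⟨h1, h2⟩
          refine ⟨(hνiff m).1 h1, ?_⟩
          by_contra hc
          push_neg at hc
          have := hq hc
          omega
        · rintro ⟨h1, h2⟩
          exact ⟨(hνiff m).2 h1, hq.antitone h2⟩
      have hbox1 : boxc p q (q i) = i.val + 1 - ν.val := by
        rw [boxc, hset1, Fin.card_Icc]
      have hrnk1 : rnk u (q i) (q i) = i.val + 1 - ν.val := by
        rw [htight (q i) (by have := hqn i; omega), hbox1]
      have himg1 : (Finset.image p (Finset.Icc ν i)).card = i.val + 1 - ν.val := by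
        rw [Finset.card_image_of_injOn (Function.Injective.injOn hp.injective), Fin.card_Icc]
      have hsub1 : ((Finset.Icc 1 (q i)).filter (fun x => q i < u x)) ⊆
          Finset.image p (Finset.Icc ν i) := by
        intro x hx
        simp only [Finset.mem_filter, Finset.mem_Icc] at hx
        obtain ⟨⟨hx1, hx2⟩, hx3⟩ := hx
        have hxn : x ≤ n := by
          have := hqn i
          omega
        obtain ⟨j, hj1, hj2⟩ := exc_corner hp hq hcond htight hx1 hxn (by omega)
        have hνj : ν ≤ j := (hνiff j).1 (by omega)
        have hji : j ≤ i := by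
          by_contra hc
          push_neg at hc
          have := IH' j hc
          rw [hj1] at this
          have := hq hc
          omega
        exact Finset.mem_image.mpr ⟨j, Finset.mem_Icc.mpr ⟨hνj, hji⟩, hj1⟩
      have hUeq : ((Finset.Icc 1 (q i)).filter (fun x => q i < u x)) =
          Finset.image p (Finset.Icc ν i) := by
        apply Finset.eq_of_subset_of_card_le hsub1
        rw [himg1]
        have : ((Finset.Icc 1 (q i)).filter (fun x => q i < u x)).card = i.val + 1 - ν.val := by
          rw [← rnk, hrnk1]
        omega
      have hpiU : p i ∈ ((Finset.Icc 1 (q i)).filter (fun x => q i < u x)) := by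
        rw [hUeq]
        exact Finset.mem_image.mpr ⟨i, Finset.mem_Icc.mpr ⟨hνi, le_rfl⟩, rfl⟩
      have step1 : q i < u (p i) := (Finset.mem_filter.mp hpiU).2
      -- Step 2 : u (p i) ≤ q i + 1
      by_contra hbigne
      have hbig : q i + 2 ≤ u (p i) := by
        rcases Nat.lt_or_ge (u (p i)) (q i + 2) with h | h
        · exact absurd (by omega) hbigne
        · exact h
      have hT2 : (Finset.univ.filter (fun m : Fin t => p m ≤ q i + 1)).Nonempty := by
        refine ⟨i, ?_⟩
        simp only [Finset.mem_filter, Finset.mem_univ, true_and]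
        omega
      set ν' := (Finset.univ.filter (fun m : Fin t => p m ≤ q i + 1)).min' hT2 with hν'
      have hν'iff := ple_iff hp hT2
      have hν'i : ν' ≤ i := (hν'iff i).1 (by omega)
      have hset2 : (Finset.univ.filter (fun m : Fin t => p m ≤ q i + 1 ∧ q i + 1 ≤ q m)) =
          Finset.Ico ν' i := by
        ext m
        simp only [Finset.mem_filter, Finset.mem_univ, true_and, Finset.mem_Ico]
        constructor
        · rintro ⟨h1, h2⟩
          refine ⟨(hν'iff m).1 h1, ?_⟩
          have : q i < q m := by omega
          exact hq.lt_iff_gt.mp this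
        · rintro ⟨h1, h2⟩
          have := hq h2
          exact ⟨(hν'iff m).2 h1, by omega⟩
      have hbox2 : boxc p q (q i + 1) = i.val - ν'.val := by
        rw [boxc, hset2, Fin.card_Ico]
      have hrnk2 : rnk u (q i + 1) (q i + 1) = i.val - ν'.val := by
        rw [htight (q i + 1) (hqn i), hbox2]
      have himg2 : (Finset.image p (Finset.Icc ν' i)).card = i.val + 1 - ν'.val := by
        rw [Finset.card_image_of_injOn (Function.Injective.injOn hp.injective), Fin.card_Icc]
      have hsub2 : ((Finset.Icc 1 (q i + 1)).filter (fun x => q i + 1 < u x)) ⊆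
          Finset.image p (Finset.Icc ν' i) := by
        intro x hx
        simp only [Finset.mem_filter, Finset.mem_Icc] at hx
        obtain ⟨⟨hx1, hx2⟩, hx3⟩ := hx
        have hxn : x ≤ n := by
          have := hqn i
          omega
        obtain ⟨j, hj1, hj2⟩ := exc_corner hp hq hcond htight hx1 hxn (by omega)
        have hν'j : ν' ≤ j := (hν'iff j).1 (by omega)
        have hji : j ≤ i := by
          by_contra hc
          push_neg at hc
          have := IH' j hc
          rw [hj1] at this
          have := hq hc
          omega
        exact Finset.mem_image.mpr ⟨j, Finset.mem_Icc.mpr ⟨hν'j, hji⟩, hj1⟩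
      -- the image cannot fit in the tight witness set: one corner m* is missing
      have hnsub : ¬ (Finset.image p (Finset.Icc ν' i) ⊆
          ((Finset.Icc 1 (q i + 1)).filter (fun x => q i + 1 < u x))) := by
        intro hsub
        have := Finset.card_le_card hsub
        rw [himg2, ← rnk, hrnk2] at this
        have : ν'.val ≤ i.val := by exact_mod_cast hν'i
        omega
      obtain ⟨y, hy1, hy2⟩ := Finset.not_subset.mp hnsub
      obtain ⟨m', hm'1, hm'2⟩ := Finset.mem_image.mp hy1
      subst hm'2
      simp only [Finset.mem_Icc] at hm'1
      have hm'ne : m' ≠ i := by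
        intro hc
        subst hc
        apply hy2
        simp only [Finset.mem_filter, Finset.mem_Icc]
        refine ⟨⟨hppos m', by omega⟩, by omega⟩
      have hm'lt : m' < i := lt_of_le_of_ne hm'1.2 hm'ne
      have hpm'gt : p i < p m' := hp hm'lt
      have hpm'le : p m' ≤ q i + 1 := (hν'iff m').2 hm'1.1
      -- m' is not in the witness set, so u (p m') ≤ q i + 1
      have hval : u (p m') ≤ q i + 1 := by
        by_contra hc
        push_neg at hc
        apply hy2
        simp only [Finset.mem_filter, Finset.mem_Icc]
        exact ⟨⟨hppos m', hpm'le⟩, hc⟩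
      have hAEm' := corner_pos_le hp hq hppos hskew hpn hcond htight m'
      rcases eq_or_lt_of_le hAEm' with hfx | hexc
      · -- fixed point at p m'
        have hbox0 := fix_c0 hp hq hu hcond htight hP2 (hppos m') (hpn m') hfx.symm
        -- but some box covers p m'
        rcases Nat.lt_or_ge (p m') (q i + 1) with hlt | hge
        · -- box i covers p m'
          have : 0 < boxc p q (p m') := by
            rw [boxc, Finset.card_pos]
            refine ⟨i, ?_⟩
            simp only [Finset.mem_filter, Finset.mem_univ, true_and]
            omega
          omega
        · -- p m' = q i + 1 : fixed at q i + 1, but boxc (q i + 1) = i - ν' ≥ 1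
          have hpm'eq : p m' = q i + 1 := by omega
          rw [hpm'eq] at hbox0
          rw [hbox2] at hbox0
          have hν'm' : ν' ≤ m' := hm'1.1
          have : ν'.val ≤ m'.val := by exact_mod_cast hν'm'
          have : m'.val < i.val := by exact_mod_cast hm'lt
          omega
      · -- excedance at p m' with value ≤ q i + 1 < u (p i) : contradicts increasing excedances
        have := hP1 (p m') (hppos m') (hpn m') hexc (p i) (hppos i) hpm'gt
        omega

end unique

/-- two strictly increasing maps on a finset with the same image agree. -/
lemma eq_of_mono_same_image (s : Finset ℕ) (f g : ℕ → ℕ)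
    (hf : ∀ y ∈ s, ∀ z ∈ s, y < z → f y < f z)
    (hg : ∀ y ∈ s, ∀ z ∈ s, y < z → g y < g z)
    (him : s.image f = s.image g) :
    ∀ x ∈ s, f x = g x := by
  have key : ∀ (h : ℕ → ℕ), (∀ y ∈ s, ∀ z ∈ s, y < z → h y < h z) → ∀ x ∈ s,
      ((s.image h).filter (fun c => c < h x)).card = (s.filter (fun y => y < x)).card := by
    intro h hmono x hx
    symm
    apply Finset.card_bij (fun y _ => h y)
    · intro y hy
      simp only [Finset.mem_filter] at hy
      simp only [Finset.mem_filter, Finset.mem_image]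
      exact ⟨⟨y, hy.1, rfl⟩, hmono y hy.1 x hx hy.2⟩
    · intro y hy z hz hyz
      simp only [Finset.mem_filter] at hy hz
      rcases lt_trichotomy y z with hc | hc | hc
      · exact absurd hyz (by have := hmono y hy.1 z hz.1 hc; omega)
      · exact hc
      · exact absurd hyz (by have := hmono z hz.1 y hy.1 hc; omega)
    · intro c hc
      simp only [Finset.mem_filter, Finset.mem_image] at hc
      obtain ⟨⟨y, hy, rfl⟩, hlt⟩ := hc
      refine ⟨y, ?_, rfl⟩
      simp only [Finset.mem_filter]
      refine ⟨hy, ?_⟩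
      rcases lt_trichotomy y x with hc' | hc' | hc'
      · exact hc'
      · subst hc'; omega
      · exact absurd hlt (by have := hmono x hx y hy hc'; omega)
  intro x hx
  have h1 := key f hf x hx
  have h2 := key g hg x hx
  rw [him] at h1
  by_contra hne
  rcases lt_trichotomy (f x) (g x) with hc | hc | hc
  · -- insert (f x) into the filter < g x
    have hfx : f x ∈ s.image g := by
      rw [← him]
      exact Finset.mem_image.mpr ⟨x, hx, rfl⟩
    have hsub : insert (f x) ((s.image g).filter (fun c => c < f x)) ⊆
        ((s.image g).filter (fun c => c < g x)) := by
      intro c hcm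
      rcases Finset.mem_insert.mp hcm with h | h
      · subst h
        simp only [Finset.mem_filter]
        exact ⟨hfx, hc⟩
      · simp only [Finset.mem_filter] at h ⊢
        exact ⟨h.1, by omega⟩
    have := Finset.card_le_card hsub
    rw [Finset.card_insert_of_notMem (by
      simp only [Finset.mem_filter]
      push_neg
      intro _
      omega)] at this
    omega
  · exact hne hc
  · have hgx : g x ∈ s.image g := Finset.mem_image.mpr ⟨x, hx, rfl⟩
    have hsub : insert (g x) ((s.image g).filter (fun c => c < g x)) ⊆
        ((s.image g).filter (fun c => c < f x)) := by
      intro c hcm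
      rcases Finset.mem_insert.mp hcm with h | h
      · subst h
        simp only [Finset.mem_filter]
        exact ⟨hgx, hc⟩
      · simp only [Finset.mem_filter] at h ⊢
        exact ⟨h.1, by omega⟩
    have := Finset.card_le_card hsub
    rw [Finset.card_insert_of_notMem (by
      simp only [Finset.mem_filter]
      push_neg
      intro _
      omega)] at this
    omega

section final
variable (hp : StrictAnti p) (hq : StrictAnti q)
  (hppos : ∀ i, 0 < p i) (hqpos : ∀ i, 0 < q i)
  (hskew : ∀ i, p i ≤ q i + 1)
  (hpn : ∀ i, p i ≤ n) (hqn : ∀ i, q i + 1 ≤ n)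

include hp hq hppos hqpos in
/-- the conditions hold for any bijection taking the corner values. -/
lemma w_cond {v : ℕ → ℕ} (hvdef : ∀ i, v (p i) = q i + 1) :
    ∀ i j : Fin t, (1 : ℤ) + (i.val : ℤ) - (j.val : ℤ) ≤ (rnk v (p j) (q i) : ℤ) := by
  intro i j
  rcases le_or_gt j i with hij | hij
  · have hsub : Finset.image p (Finset.Icc j i) ⊆
        ((Finset.Icc 1 (p j)).filter (fun x => q i < v x)) := by
      intro x hx
      obtain ⟨m, hm, rfl⟩ := Finset.mem_image.mp hx
      simp only [Finset.mem_Icc] at hm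
      simp only [Finset.mem_filter, Finset.mem_Icc]
      refine ⟨⟨hppos m, hp.antitone hm.1⟩, ?_⟩
      rw [hvdef m]
      have := hq.antitone hm.2
      omega
    have hcard := Finset.card_le_card hsub
    rw [Finset.card_image_of_injOn (Function.Injective.injOn hp.injective), Fin.card_Icc] at hcard
    have hji : (j.val : ℤ) ≤ (i.val : ℤ) := by exact_mod_cast hij
    have : (i.val + 1 - j.val : ℕ) ≤ ((Finset.Icc 1 (p j)).filter (fun x => q i < v x)).card :=
      hcard
    rw [rnk]
    have h2 : ((i.val + 1 - j.val : ℕ) : ℤ) = (i.val : ℤ) + 1 - (j.val : ℤ) := by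
      omega
    have h3 : ((i.val + 1 - j.val : ℕ) : ℤ) ≤
        (((Finset.Icc 1 (p j)).filter (fun x => q i < v x)).card : ℤ) := by
      exact_mod_cast this
    omega
  · have hji : (i.val : ℤ) < (j.val : ℤ) := by exact_mod_cast hij
    have : (0 : ℤ) ≤ (rnk v (p j) (q i) : ℤ) := by positivity
    omega

variable (hwbij : Set.BijOn w (Set.Icc 1 n) (Set.Icc 1 n))
  (hwdef : ∀ i, w (p i) = q i + 1)
  (hwfill : ∀ a ∈ Set.Icc 1 n, ∀ b ∈ Set.Icc 1 n,
      a ∉ Set.range p → b ∉ Set.range p → a < b → w a < w b)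
  (hu : Set.BijOn u (Set.Icc 1 n) (Set.Icc 1 n))
  (hcond : ∀ i j : Fin t, (1 : ℤ) + (i.val : ℤ) - (j.val : ℤ) ≤ (rnk u (p j) (q i) : ℤ))
  (htight : ∀ a, a ≤ n → rnk u a a = boxc p q a)
  (hP1 : ∀ x, 1 ≤ x → x ≤ n → x < u x → ∀ y, 1 ≤ y → y < x → u y < u x)
  (hP2 : ∀ x, 1 ≤ x → x ≤ n → u x ≤ x → ∀ y, x < y → y ≤ n → u x < u y)

include hp hq hppos hqpos hskew hpn hqn hwbij hwdef hwfill hu hcond htight hP1 hP2 in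
/-- the tight permutation agrees with `w` everywhere. -/
lemma tight_eq_w : ∀ x, 1 ≤ x → x ≤ n → u x = w x := by
  have hval := corner_val hp hq hppos hqpos hskew hpn hqn hu hcond htight hP1 hP2
  intro x hx1 hxn
  by_cases hxP : ∀ i, p i ≠ x
  · -- strictly increasing fill on non-corner positions
    set Ds := ((Finset.Icc 1 n).filter (fun y => ∀ i, p i ≠ y)) with hDs
    have hxD : x ∈ Ds := by
      simp only [hDs, Finset.mem_filter, Finset.mem_Icc]
      exact ⟨⟨hx1, hxn⟩, hxP⟩
    have humono : ∀ y ∈ Ds, ∀ z ∈ Ds, y < z → u y < u z := by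
      intro y hy z hz hyz
      simp only [hDs, Finset.mem_filter, Finset.mem_Icc] at hy hz
      have huy : u y ≤ y := by
        by_contra hc
        push_neg at hc
        obtain ⟨j, hj1, _⟩ := exc_corner hp hq hcond htight hy.1.1 hy.1.2 hc
        exact hy.2 j hj1
      exact hP2 y hy.1.1 hy.1.2 huy z hyz hz.1.2
    have hwmono : ∀ y ∈ Ds, ∀ z ∈ Ds, y < z → w y < w z := by
      intro y hy z hz hyz
      simp only [hDs, Finset.mem_filter, Finset.mem_Icc] at hy hz
      exact hwfill y ⟨hy.1.1, hy.1.2⟩ z ⟨hz.1.1, hz.1.2⟩ (notinP hy.2) (notinP hz.2) hyz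
    have himage : ∀ (v : ℕ → ℕ), Set.BijOn v (Set.Icc 1 n) (Set.Icc 1 n) →
        (∀ i, v (p i) = q i + 1) →
        Ds.image v = ((Finset.Icc 1 n).filter (fun c => ∀ i, q i + 1 ≠ c)) := by
      intro v hv hvdef
      apply Finset.eq_of_subset_of_card_le
      · intro c hc
        obtain ⟨y, hy, rfl⟩ := Finset.mem_image.mp hc
        simp only [hDs, Finset.mem_filter, Finset.mem_Icc] at hy
        have hvy := hv.mapsTo (⟨hy.1.1, hy.1.2⟩ : y ∈ Set.Icc 1 n)
        simp only [Finset.mem_filter, Finset.mem_Icc]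
        refine ⟨⟨hvy.1, hvy.2⟩, ?_⟩
        intro i hc'
        have : v (p i) = v y := by rw [hvdef i, hc']
        have := hv.injOn (pi_mem hppos hpn i) ⟨hy.1.1, hy.1.2⟩ this
        exact hy.2 i this
      · have h1 : (Ds.image v).card = Ds.card := by
          apply Finset.card_image_of_injOn
          intro y hy z hz hyz
          simp only [hDs, Finset.coe_filter, Finset.mem_Icc, Set.mem_setOf_eq] at hy hz
          exact hv.injOn ⟨hy.1.1, hy.1.2⟩ ⟨hz.1.1, hz.1.2⟩ hyz
        have h2 : Ds.card + t = n := by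
          have := compl_add hp.injective hppos n
          have hall : (Finset.univ.filter (fun i : Fin t => p i ≤ n)) = Finset.univ := by
            apply Finset.filter_true_of_mem
            intro i _
            exact hpn i
          rw [hall] at this
          simp only [Finset.card_univ, Fintype.card_fin] at this
          exact this
        have h3 : ((Finset.Icc 1 n).filter (fun c => ∀ i, q i + 1 ≠ c)).card + t = n := by
          have := compl_add (f := fun i => q i + 1)
            (fun a b hab => hq.injective (Nat.succ_injective hab)) (fun m => Nat.succ_pos (q m)) n
          have hall : (Finset.univ.filter (fun i : Fin t => q i + 1 ≤ n)) = Finset.univ := by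
            apply Finset.filter_true_of_mem
            intro i _
            exact hqn i
          rw [hall] at this
          simp only [Finset.card_univ, Fintype.card_fin] at this
          exact this
        omega
    have him : Ds.image u = Ds.image w := by
      rw [himage u hu hval, himage w hwbij hwdef]
    exact eq_of_mono_same_image Ds u w humono hwmono him x hxD
  · push_neg at hxP
    obtain ⟨i, rfl⟩ := hxP
    rw [hval i, hwdef i]

end final

end P321

theorem length_321_avoiding (n t : ℕ) (p q : Fin t → ℕ)
    (hp : StrictAnti p) (hq : StrictAnti q)
    (hppos : ∀ i, 0 < p i) (hqpos : ∀ i, 0 < q i)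
    (hskew : ∀ i, p i ≤ q i + 1)
    (hpn : ∀ i, p i ≤ n) (hqn : ∀ i, q i + 1 ≤ n)
    (w : ℕ → ℕ) (hwbij : Set.BijOn w (Set.Icc 1 n) (Set.Icc 1 n))
    (hwdef : ∀ i, w (p i) = q i + 1)
    (hwfill : ∀ a ∈ Set.Icc 1 n, ∀ b ∈ Set.Icc 1 n,
      a ∉ Set.range p → b ∉ Set.range p → a < b → w a < w b) :
    (∀ i j : Fin t,
      (1 : ℤ) + (i.val : ℤ) - (j.val : ℤ) ≤
        (((Finset.Icc 1 (p j)).filter (fun x => q i < w x)).card : ℤ)) ∧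
    permLength n w = ∑ i, (q i + 1 - p i) ∧
    (∀ w' : ℕ → ℕ, Set.BijOn w' (Set.Icc 1 n) (Set.Icc 1 n) →
      (∀ i j : Fin t,
        (1 : ℤ) + (i.val : ℤ) - (j.val : ℤ) ≤
          (((Finset.Icc 1 (p j)).filter (fun x => q i < w' x)).card : ℤ)) →
      permLength n w ≤ permLength n w' ∧
        (permLength n w' = permLength n w → ∀ x ∈ Set.Icc 1 n, w' x = w x)) := by
  have hperm_w : permLength n w = ∑ i, (q i + 1 - p i) :=
    P321.permLength_w hp hq hppos hskew hpn hqn hwbij hwdef hwfill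
  refine ⟨fun i j => P321.w_cond hp hq hppos hqpos hwdef i j, hperm_w, ?_⟩
  intro w' hw'bij hw'cond
  have hcond' : ∀ i j : Fin t,
      (1 : ℤ) + (i.val : ℤ) - (j.val : ℤ) ≤ (P321.rnk w' (p j) (q i) : ℤ) :=
    fun i j => hw'cond i j
  have hL := P321.permLength_ge_L hp hq hppos hqn hw'bij hcond'
  constructor
  · rw [hperm_w]
    exact hL
  · intro hlen x hx
    have heq : permLength n w' = ∑ i, (q i + 1 - p i) := by rw [hlen, hperm_w]
    obtain ⟨T1, T2⟩ := P321.tight_of_eq hp hq hppos hqn hw'bij hcond' heq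
    have hT2 : ∀ a, a ≤ n → P321.rnk w' a a = P321.boxc p q a := T2
    have hP1 : ∀ x, 1 ≤ x → x ≤ n → x < w' x → ∀ y, 1 ≤ y → y < x → w' y < w' x :=
      fun x h1 h2 hexc => P321.eq_case_exc hw'bij
        (Finset.mem_Icc.mpr ⟨h1, h2⟩) (T1 x h1 h2) hexc
    have hP2 : ∀ x, 1 ≤ x → x ≤ n → w' x ≤ x → ∀ y, x < y → y ≤ n → w' x < w' y :=
      fun x h1 h2 hne => P321.eq_case_nonexc hw'bij
        (Finset.mem_Icc.mpr ⟨h1, h2⟩) (T1 x h1 h2) hne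
    exact P321.tight_eq_w hp hq hppos hqpos hskew hpn hqn hwbij hwdef hwfill
      hw'bij hcond' hT2 hP1 hP2 x hx.1 hx.2
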